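/- Let (E, f, w, W) be an MSK instance, let A be the output of a greedy execution on it, and let V be the associated value function. Let X ⊆ E with w(X) ≤ W and let X_1, …, X_k be a partition of X into nonempty sets with r_1 ≥ r_2 ≥ … ≥ r_k > 0, where r_j := f_{S_{j−1}}(X_j)/w(X_j) and S_j := X_1 ∪ … ∪ X_j. Let h be the bounding function of X_1, …, X_k, and let W_max := min( W − max_{e∈X} w(e), w(A) ). Then V(u) ≥ h(u) for every u ∈ [0, W_max]. -/

import Mathlib

open Finset

variable {α : Type*}

/-- A set function `f` is submodular on ground set `E`. -/
def SubmodularOn [DecidableEq α] (E : Finset α) (f : Finset α → ℝ) : Prop :=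
  ∀ A B : Finset α, A ⊆ B → B ⊆ E → ∀ e ∈ E, e ∉ B →
    f (insert e B) - f B ≤ f (insert e A) - f A

/-- A set function `f` is monotone on ground set `E`. -/
def MonotoneOnSets (E : Finset α) (f : Finset α → ℝ) : Prop :=
  ∀ S T : Finset α, S ⊆ T → T ⊆ E → f S ≤ f T

/-- A set function `f` is non-negative on ground set `E`. -/
def NonnegOn (E : Finset α) (f : Finset α → ℝ) : Prop :=
  ∀ S : Finset α, S ⊆ E → 0 ≤ f S

/-- Total weight of a set. -/
def wt (w : α → ℝ) (S : Finset α) : ℝ := ∑ e ∈ S, w e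

/-- Marginal value `f_A(S) = f(A ∪ S) - f(A)`. -/
def marginal [DecidableEq α] (f : Finset α → ℝ) (A S : Finset α) : ℝ := f (A ∪ S) - f A

/-- A greedy execution on the MSK instance `(E, f, w, W)`: an ordering `e_1, …, e_n`
of the elements of `E` (here `order`, 0-indexed) together with sets
`sol 0 = ∅ ⊆ sol 1 ⊆ … ⊆ sol n` such that at every step the considered element maximizes
the marginal density among the remaining elements, and it is added iff it fits. -/
structure GreedyExec [DecidableEq α] (E : Finset α) (f : Finset α → ℝ) (w : α → ℝ)
    (W : ℝ) where
  order : List α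
  nodup : order.Nodup
  ground : order.toFinset = E
  sol : ℕ → Finset α
  sol_zero : sol 0 = ∅
  greedy_max : ∀ (i : ℕ) (hi : i < order.length), ∀ e ∈ order.drop i,
    marginal f (sol i) {e} / w e ≤
      marginal f (sol i) {order.get ⟨i, hi⟩} / w (order.get ⟨i, hi⟩)
  step_add : ∀ (i : ℕ) (hi : i < order.length),
    wt w (sol i) + w (order.get ⟨i, hi⟩) ≤ W →
      sol (i + 1) = insert (order.get ⟨i, hi⟩) (sol i)
  step_skip : ∀ (i : ℕ) (hi : i < order.length),
    W < wt w (sol i) + w (order.get ⟨i, hi⟩) → sol (i + 1) = sol i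

/-- The output of a greedy execution. -/
def GreedyExec.out [DecidableEq α] {E : Finset α} {f : Finset α → ℝ} {w : α → ℝ} {W : ℝ}
    (g : GreedyExec E f w W) : Finset α := g.sol g.order.length

/-- `S_j = X_1 ∪ … ∪ X_j` (with `S_0 = ∅`), for a partition indexed by `1, …, k`. -/
def partS [DecidableEq α] (X : ℕ → Finset α) (j : ℕ) : Finset α :=
  (Finset.Icc 1 j).biUnion X

/-- The density `r_j = f_{S_{j-1}}(X_j) / w(X_j)`. -/
noncomputable def partR [DecidableEq α] (f : Finset α → ℝ) (w : α → ℝ)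
    (X : ℕ → Finset α) (j : ℕ) : ℝ :=
  marginal f (partS X (j - 1)) (X j) / wt w (X j)

/-- The breakpoint `D_j = ∑_{i=1}^{j} w(X_i)·ln(r_i / r_{j+1})` (so `D_0 = 0`). -/
noncomputable def partD [DecidableEq α] (f : Finset α → ℝ) (w : α → ℝ)
    (X : ℕ → Finset α) (j : ℕ) : ℝ :=
  ∑ i ∈ Finset.Icc 1 j, wt w (X i) * Real.log (partR f w X i / partR f w X (j + 1))

lemma aux_exp_step (s ρ δ a0 : ℝ) (hs : 0 < s) (hρ : 0 ≤ ρ) (hδ : 0 ≤ δ)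
    (ha : a0 ≤ ρ * s) : a0 - ρ * δ ≤ a0 * Real.exp (-δ / s) := by
  rcases le_or_gt a0 0 with h0 | h0
  · have h1 : Real.exp (-δ / s) ≤ 1 := by
      rw [Real.exp_le_one_iff]
      exact div_nonpos_of_nonpos_of_nonneg (by linarith) hs.le
    nlinarith [mul_nonneg hρ hδ]
  · have h1 : 1 - δ / s ≤ Real.exp (-δ / s) := by
      rw [neg_div]
      have := Real.add_one_le_exp (-(δ / s))
      linarith
    have h2 : a0 / s ≤ ρ := (div_le_iff₀ hs).2 (by linarith)
    have h3 : a0 - ρ * δ ≤ a0 * (1 - δ / s) := by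
      have := mul_le_mul_of_nonneg_right h2 hδ
      rw [div_mul_eq_mul_div] at this
      have : a0 * δ / s ≤ ρ * δ := this
      calc a0 - ρ * δ ≤ a0 - a0 * δ / s := by linarith
        _ = a0 * (1 - δ / s) := by ring
    exact h3.trans (mul_le_mul_of_nonneg_left h1 h0.le)

lemma aux_spread {α : Type*} [DecidableEq α] {E : Finset α} {f : Finset α → ℝ}
    (hsub : ∀ A B : Finset α, A ⊆ B → B ⊆ E → ∀ e ∈ E, e ∉ B →
      f (insert e B) - f B ≤ f (insert e A) - f A) :
    ∀ S : Finset α, S ⊆ E → ∀ A : Finset α, A ⊆ E →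
      f (A ∪ S) - f A ≤ ∑ e ∈ S \ A, (f (insert e A) - f A) := by
  intro S
  induction S using Finset.induction_on with
  | empty => intro _ A _; simp
  | @insert x S hx ih =>
    intro hSE A hA
    have hSE' : S ⊆ E := (Finset.subset_insert x S).trans hSE
    have hxE : x ∈ E := hSE (Finset.mem_insert_self x S)
    by_cases hxA : x ∈ A
    · have h1 : A ∪ insert x S = A ∪ S := by
        rw [Finset.union_insert, Finset.insert_eq_self.2 (Finset.mem_union_left S hxA)]
      have h2 : insert x S \ A = S \ A := Finset.insert_sdiff_of_mem S hxA
      rw [h1, h2]; exact ih hSE' A hA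
    · have h1 : A ∪ insert x S = insert x (A ∪ S) := by
        rw [Finset.union_insert]
      have hxAS : x ∉ A ∪ S := by simp [hxA, hx]
      have h2 : f (insert x (A ∪ S)) - f (A ∪ S) ≤ f (insert x A) - f A :=
        hsub A (A ∪ S) Finset.subset_union_left (Finset.union_subset hA hSE') x hxE hxAS
      have h3 : insert x S \ A = insert x (S \ A) := Finset.insert_sdiff_of_notMem S hxA
      have h4 : x ∉ S \ A := fun hm => hx (Finset.mem_sdiff.1 hm).1
      rw [h1, h3, Finset.sum_insert h4]
      have := ih hSE' A hA
      linarith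

/-- Lemma 2.4: if `V` is the value function of a greedy execution with
output `A`, and `h` is the bounding function of a partition `X_1, …, X_k` of a set
`X ⊆ E` with `w(X) ≤ W`, then `V(u) ≥ h(u)` for every
`u ∈ [0, min(W - max_{e∈X} w(e), w(A))]`. -/
theorem value_function_dominates_bounding_function [DecidableEq α]
    (E : Finset α) (f : Finset α → ℝ) (w : α → ℝ) (W : ℝ)
    (hf0 : NonnegOn E f) (hmono : MonotoneOnSets E f) (hsub : SubmodularOn E f)
    (hw : ∀ e ∈ E, 0 < w e) (hW : 0 ≤ W)
    (g : GreedyExec E f w W)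
    (V : ℝ → ℝ)
    (hV : ∀ (i : ℕ) (hi : i < g.order.length), ∀ u : ℝ,
      wt w (g.sol i) ≤ u → u ≤ wt w (g.sol (i + 1)) →
      V u = f (g.sol i) + (u - wt w (g.sol i)) *
        (marginal f (g.sol i) {g.order.get ⟨i, hi⟩} / w (g.order.get ⟨i, hi⟩)))
    (Xset : Finset α) (hXE : Xset ⊆ E) (hXw : wt w Xset ≤ W) (hXne : Xset.Nonempty)
    (k : ℕ) (hk : 1 ≤ k) (X : ℕ → Finset α)
    (hXne' : ∀ i ∈ Finset.Icc 1 k, (X i).Nonempty)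
    (hdisj : ∀ i ∈ Finset.Icc 1 k, ∀ j ∈ Finset.Icc 1 k, i ≠ j → Disjoint (X i) (X j))
    (hcover : (Finset.Icc 1 k).biUnion X = Xset)
    (hr : ∀ j ∈ Finset.Icc 1 (k - 1), partR f w X (j + 1) ≤ partR f w X j)
    (hrpos : ∀ j ∈ Finset.Icc 1 k, 0 < partR f w X j)
    (h : ℝ → ℝ)
    (hh : ∀ j ∈ Finset.Icc 1 k, ∀ u : ℝ, partD f w X (j - 1) ≤ u →
      (j = k ∨ u < partD f w X j) →
      h u = f (partS X j) - partR f w X j * wt w (partS X j) *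
        Real.exp (-(u - partD f w X (j - 1)) / wt w (partS X j))) :
    ∀ u : ℝ, 0 ≤ u → u ≤ min (W - Xset.sup' hXne w) (wt w g.out) → h u ≤ V u := by
  intro u hu0 huW
  set n := g.order.length with hn
  -- basic weight facts
  have wt_nonneg : ∀ S : Finset α, S ⊆ E → 0 ≤ wt w S := fun S hS =>
    Finset.sum_nonneg fun e he => (hw e (hS he)).le
  have wt_mono : ∀ S T : Finset α, S ⊆ T → T ⊆ E → wt w S ≤ wt w T := fun S T hST hTE =>
    Finset.sum_le_sum_of_subset_of_nonneg hST fun e he _ => (hw e (hTE he)).le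
  have wt_pos : ∀ S : Finset α, S ⊆ E → S.Nonempty → 0 < wt w S := fun S hS hne =>
    Finset.sum_pos (fun e he => hw e (hS he)) hne
  -- greedy structural facts
  have sol_succ : ∀ i, i < n → g.sol i ⊆ g.sol (i + 1) := by
    intro i hi
    rcases le_or_gt (wt w (g.sol i) + w (g.order.get ⟨i, hi⟩)) W with hle | hlt
    · rw [g.step_add i hi hle]; exact Finset.subset_insert _ _
    · rw [g.step_skip i hi hlt]
  have sol_mono : ∀ i j, i ≤ j → j ≤ n → g.sol i ⊆ g.sol j := by
    intro i j hij
    induction j, hij using Nat.le_induction with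
    | base => intro _; exact subset_rfl
    | succ j hij ih =>
      intro hjn
      exact (ih (by omega)).trans (sol_succ j (by omega))
  have sol_sub : ∀ i, i ≤ n → g.sol i ⊆ E := by
    intro i
    induction i with
    | zero => intro _; rw [g.sol_zero]; exact Finset.empty_subset E
    | succ i ih =>
      intro hi1
      have hi : i < n := hi1
      have hiE : g.order.get ⟨i, hi⟩ ∈ E := by
        have := List.mem_toFinset.2 (List.get_mem g.order ⟨i, hi⟩)
        rwa [g.ground] at this
      rcases le_or_gt (wt w (g.sol i) + w (g.order.get ⟨i, hi⟩)) W with hle | hlt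
      · rw [g.step_add i hi hle]; exact Finset.insert_subset hiE (ih (by omega))
      · rw [g.step_skip i hi hlt]; exact ih (by omega)
  have rho_nonneg : ∀ (i : ℕ) (hi : i < n),
      0 ≤ marginal f (g.sol i) {g.order.get ⟨i, hi⟩} / w (g.order.get ⟨i, hi⟩) := by
    intro i hi
    have hiE : g.order.get ⟨i, hi⟩ ∈ E := by
      have := List.mem_toFinset.2 (List.get_mem g.order ⟨i, hi⟩)
      rwa [g.ground] at this
    have hA : g.sol i ⊆ E := sol_sub i hi.le
    have hnum : 0 ≤ marginal f (g.sol i) {g.order.get ⟨i, hi⟩} := by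
      have := hmono (g.sol i) (g.sol i ∪ {g.order.get ⟨i, hi⟩}) Finset.subset_union_left
        (Finset.union_subset hA (by simpa using hiE))
      unfold marginal
      linarith
    exact div_nonneg hnum (hw _ hiE).le
  have hn0 : 0 < n := by
    obtain ⟨x, hx⟩ := hXne
    have hxE : x ∈ g.order.toFinset := by rw [g.ground]; exact hXE hx
    exact List.length_pos_iff.2 (List.ne_nil_of_mem (List.mem_toFinset.1 hxE))
  have V0 : V 0 = f ∅ := by
    have h1 : wt w (g.sol 0) = 0 := by rw [g.sol_zero]; simp [wt]
    have h2 : (0 : ℝ) ≤ wt w (g.sol 1) := wt_nonneg _ (sol_sub 1 hn0)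
    rw [hV 0 hn0 0 (le_of_eq h1) h2, h1, g.sol_zero]
    ring
  -- partition facts
  have hXsub : ∀ i, i ∈ Finset.Icc 1 k → X i ⊆ Xset := by
    intro i hi e he
    rw [← hcover]; exact Finset.mem_biUnion.2 ⟨i, hi, he⟩
  have partS_sub : ∀ j, j ≤ k → partS X j ⊆ Xset := by
    intro j hj
    rw [← hcover]
    exact Finset.biUnion_subset_biUnion_of_subset_left X (Finset.Icc_subset_Icc_right hj)
  have partS_ne : ∀ j, 1 ≤ j → (partS X j).Nonempty := by
    intro j hj
    obtain ⟨x, hx⟩ := hXne' 1 (Finset.mem_Icc.2 ⟨le_rfl, hk⟩)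
    exact ⟨x, Finset.mem_biUnion.2 ⟨1, Finset.mem_Icc.2 ⟨le_rfl, hj⟩, hx⟩⟩
  have sjpos : ∀ j, 1 ≤ j → j ≤ k → 0 < wt w (partS X j) := fun j h1 h2 =>
    wt_pos _ ((partS_sub j h2).trans hXE) (partS_ne j h1)
  have wjpos : ∀ i, i ∈ Finset.Icc 1 k → 0 < wt w (X i) := fun i hi =>
    wt_pos _ ((hXsub i hi).trans hXE) (hXne' i hi)
  have wt_partS : ∀ j, j ≤ k → wt w (partS X j) = ∑ i ∈ Finset.Icc 1 j, wt w (X i) := by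
    intro j hj
    refine Finset.sum_biUnion ?_
    intro a ha b hb hab
    simp only [Finset.coe_Icc, Set.mem_Icc] at ha hb
    exact hdisj a (Finset.mem_Icc.2 ⟨ha.1, ha.2.trans hj⟩) b
      (Finset.mem_Icc.2 ⟨hb.1, hb.2.trans hj⟩) hab
  have Icc_succ : ∀ j : ℕ, Finset.Icc 1 (j + 1) = insert (j + 1) (Finset.Icc 1 j) := by
    intro j
    ext x
    simp only [Finset.mem_Icc, Finset.mem_insert]
    omega
  have partS_succ : ∀ j : ℕ, partS X (j + 1) = partS X j ∪ X (j + 1) := by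
    intro j
    unfold partS
    rw [Icc_succ j, Finset.biUnion_insert, Finset.union_comm]
  have disj_succ : ∀ j, j + 1 ≤ k → Disjoint (partS X j) (X (j + 1)) := by
    intro j hj
    unfold partS
    rw [Finset.disjoint_biUnion_left]
    intro i hi
    have hi' := Finset.mem_Icc.1 hi
    exact hdisj i (Finset.mem_Icc.2 ⟨hi'.1, by omega⟩) (j + 1)
      (Finset.mem_Icc.2 ⟨by omega, hj⟩) (by omega)
  have wt_partS_succ : ∀ j, j + 1 ≤ k →
      wt w (partS X (j + 1)) = wt w (partS X j) + wt w (X (j + 1)) := by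
    intro j hj
    rw [partS_succ j]
    exact Finset.sum_union (disj_succ j hj)
  have fS_succ : ∀ j, j + 1 ≤ k →
      f (partS X (j + 1)) = f (partS X j) + partR f w X (j + 1) * wt w (X (j + 1)) := by
    intro j hj
    have hwj : wt w (X (j + 1)) ≠ 0 := (wjpos (j + 1) (Finset.mem_Icc.2 ⟨by omega, hj⟩)).ne'
    have hrw : partR f w X (j + 1) * wt w (X (j + 1)) = marginal f (partS X j) (X (j + 1)) := by
      unfold partR
      rw [Nat.add_sub_cancel, div_mul_cancel₀ _ hwj]
    rw [hrw]
    unfold marginal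
    rw [← partS_succ j]
    ring
  have partS_zero : partS X 0 = ∅ := by unfold partS; simp
  have partS_one : partS X 1 = X 1 := by unfold partS; simp
  have r1s1 : partR f w X 1 * wt w (partS X 1) = f (partS X 1) - f ∅ := by
    have hw1 : wt w (X 1) ≠ 0 := (wjpos 1 (Finset.mem_Icc.2 ⟨le_rfl, hk⟩)).ne'
    rw [partS_one]
    unfold partR
    rw [show (1 : ℕ) - 1 = 0 from rfl, partS_zero, div_mul_cancel₀ _ hw1]
    unfold marginal
    rw [Finset.empty_union]
  have rmono : ∀ i j, 1 ≤ i → i ≤ j → j ≤ k → partR f w X j ≤ partR f w X i := by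
    intro i j h1 hij
    induction j, hij using Nat.le_induction with
    | base => intro _; exact le_rfl
    | succ j hij ih =>
      intro hjk
      have hstep := hr j (Finset.mem_Icc.2 ⟨by omega, by omega⟩)
      exact hstep.trans (ih (by omega))
  have Dnonneg : ∀ j, j + 1 ≤ k → 0 ≤ partD f w X j := by
    intro j hj
    refine Finset.sum_nonneg fun i hi => ?_
    have hi' := Finset.mem_Icc.1 hi
    refine mul_nonneg (wt_nonneg _ ((hXsub i (Finset.mem_Icc.2 ⟨hi'.1, by omega⟩)).trans hXE)) ?_
    refine Real.log_nonneg ?_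
    rw [one_le_div (hrpos (j + 1) (Finset.mem_Icc.2 ⟨by omega, hj⟩))]
    exact rmono i (j + 1) hi'.1 (by omega) hj
  have D0 : partD f w X 0 = 0 := by unfold partD; simp
  have Dstep : ∀ j, 1 ≤ j → j + 1 ≤ k →
      partD f w X j = partD f w X (j - 1)
        + wt w (partS X j) * Real.log (partR f w X j / partR f w X (j + 1)) := by
    intro j h1 hjk
    obtain ⟨m, rfl⟩ : ∃ m, j = m + 1 := ⟨j - 1, by omega⟩
    simp only [Nat.add_sub_cancel]
    have hrp : ∀ i, 1 ≤ i → i ≤ k → 0 < partR f w X i := fun i a b =>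
      hrpos i (Finset.mem_Icc.2 ⟨a, b⟩)
    have split : ∀ i ∈ Finset.Icc 1 (m + 1),
        wt w (X i) * Real.log (partR f w X i / partR f w X (m + 1 + 1))
        = wt w (X i) * Real.log (partR f w X i / partR f w X (m + 1))
          + wt w (X i) * Real.log (partR f w X (m + 1) / partR f w X (m + 1 + 1)) := by
      intro i hi
      have hi' := Finset.mem_Icc.1 hi
      have ha := hrp i hi'.1 (by omega)
      have hb := hrp (m + 1) (by omega) (by omega)
      have hc := hrp (m + 1 + 1) (by omega) (by omega)
      rw [Real.log_div ha.ne' hc.ne', Real.log_div ha.ne' hb.ne', Real.log_div hb.ne' hc.ne']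
      ring
    have key : partD f w X (m + 1) = partD f w X m
        + (∑ i ∈ Finset.Icc 1 (m + 1), wt w (X i))
          * Real.log (partR f w X (m + 1) / partR f w X (m + 1 + 1)) := by
      unfold partD
      rw [Finset.sum_congr rfl split, Finset.sum_add_distrib, ← Finset.sum_mul]
      congr 1
      rw [Icc_succ m, Finset.sum_insert (by simp),
        div_self (hrp (m + 1) (by omega) (by omega)).ne', Real.log_one, mul_zero, zero_add]
    rw [key, ← wt_partS (m + 1) (by omega)]
  -- element availability for greedy
  have mem_drop : ∀ (i : ℕ) (hi : i < n), wt w (g.sol i) ≤ W - Xset.sup' hXne w →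
      ∀ e ∈ Xset, e ∉ g.sol i → e ∈ g.order.drop i := by
    intro i hi hfit e heX heA
    have heord : e ∈ g.order := by
      have : e ∈ g.order.toFinset := by rw [g.ground]; exact hXE heX
      exact List.mem_toFinset.1 this
    obtain ⟨p, hp⟩ := List.mem_iff_get.1 heord
    rcases lt_or_ge (p : ℕ) i with hpi | hpi
    · exfalso
      have hwe : w e ≤ Xset.sup' hXne w := Finset.le_sup' w heX
      have hps : wt w (g.sol p) ≤ wt w (g.sol i) :=
        wt_mono _ _ (sol_mono p i hpi.le hi.le) (sol_sub i hi.le)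
      have hfit2 : wt w (g.sol p) + w (g.order.get ⟨(p : ℕ), p.isLt⟩) ≤ W := by
        have : g.order.get ⟨(p : ℕ), p.isLt⟩ = e := hp
        rw [this]; linarith
      have hadd := g.step_add (p : ℕ) p.isLt hfit2
      have hmem : e ∈ g.sol ((p : ℕ) + 1) := by
        rw [hadd]
        exact Finset.mem_insert.2 (Or.inl hp.symm)
      exact heA (sol_mono ((p : ℕ) + 1) i (by omega) hi.le hmem)
    · have hlen : (p : ℕ) - i < (g.order.drop i).length := by
        rw [List.length_drop]; omega
      have hidx : (g.order.drop i)[(p : ℕ) - i]'hlen = e := by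
        rw [List.getElem_drop]
        have : g.order[i + ((p : ℕ) - i)]'(by omega) = g.order[(p : ℕ)]'p.isLt := by
          congr 1; omega
        rw [this, ← hp]
        rfl
      rw [← hidx]
      exact List.getElem_mem hlen
  -- key inequality: greedy density dominates remaining partition density
  have key : ∀ j, 1 ≤ j → j ≤ k → ∀ (i : ℕ) (hi : i < n),
      wt w (g.sol i) ≤ W - Xset.sup' hXne w →
      f (partS X j) - f (g.sol i) ≤
        (marginal f (g.sol i) {g.order.get ⟨i, hi⟩} / w (g.order.get ⟨i, hi⟩))
          * wt w (partS X j) := by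
    intro j h1 hjk i hi hfit
    set ρ := marginal f (g.sol i) {g.order.get ⟨i, hi⟩} / w (g.order.get ⟨i, hi⟩) with hρdef
    have hρ0 := rho_nonneg i hi
    have hAE : g.sol i ⊆ E := sol_sub i hi.le
    have hSX : partS X j ⊆ Xset := partS_sub j hjk
    have hSE : partS X j ⊆ E := hSX.trans hXE
    have h2 : f (partS X j) ≤ f (g.sol i ∪ partS X j) :=
      hmono _ _ Finset.subset_union_right (Finset.union_subset hAE hSE)
    have h3 := aux_spread hsub (partS X j) hSE (g.sol i) hAE
    have h4 : ∀ e ∈ partS X j \ g.sol i, f (insert e (g.sol i)) - f (g.sol i) ≤ ρ * w e := by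
      intro e he
      obtain ⟨heS, heA⟩ := Finset.mem_sdiff.1 he
      have heX : e ∈ Xset := hSX heS
      have hdrop := mem_drop i hi hfit e heX heA
      have hgm := g.greedy_max i hi e hdrop
      have hwe : 0 < w e := hw e (hXE heX)
      have h5 : marginal f (g.sol i) {e} ≤ ρ * w e := (div_le_iff₀ hwe).1 hgm
      unfold marginal at h5
      rw [Finset.union_comm, ← Finset.insert_eq] at h5
      exact h5
    have h5 : ∑ e ∈ partS X j \ g.sol i, (f (insert e (g.sol i)) - f (g.sol i))
        ≤ ∑ e ∈ partS X j \ g.sol i, ρ * w e := Finset.sum_le_sum h4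
    have h6 : ∑ e ∈ partS X j \ g.sol i, ρ * w e = ρ * wt w (partS X j \ g.sol i) := by
      rw [← Finset.mul_sum]; rfl
    have h7 : wt w (partS X j \ g.sol i) ≤ wt w (partS X j) :=
      wt_mono _ _ Finset.sdiff_subset hSE
    have h8 : ρ * wt w (partS X j \ g.sol i) ≤ ρ * wt w (partS X j) :=
      mul_le_mul_of_nonneg_left h7 hρ0
    linarith
  -- the exponential-decay engine along the greedy curve
  have engine : ∀ (c s : ℝ), 0 < s →
      (∀ (i : ℕ) (hi : i < n), wt w (g.sol i) ≤ W - Xset.sup' hXne w →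
        c - f (g.sol i) ≤
          (marginal f (g.sol i) {g.order.get ⟨i, hi⟩} / w (g.order.get ⟨i, hi⟩)) * s) →
      ∀ a b : ℝ, 0 ≤ a → a ≤ b → b ≤ min (W - Xset.sup' hXne w) (wt w g.out) →
      c - V b ≤ (c - V a) * Real.exp (-(b - a) / s) := by
    intro c s hs hcs a b ha hab hb
    have hs0 : s ≠ 0 := hs.ne'
    have hb' : b ≤ wt w (g.sol n) := hb.trans (min_le_right _ _)
    have hbW : b ≤ W - Xset.sup' hXne w := hb.trans (min_le_left _ _)
    have main : ∀ m, m ≤ n →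
        (c - V (max a (min b (wt w (g.sol m)))))
            * Real.exp (max a (min b (wt w (g.sol m))) / s)
          ≤ (c - V a) * Real.exp (a / s) := by
      intro m
      induction m with
      | zero =>
        intro _
        have h0 : wt w (g.sol 0) = 0 := by rw [g.sol_zero]; simp [wt]
        rw [h0, min_eq_right (ha.trans hab), max_eq_left ha]
      | succ m ih =>
        intro hm1
        have hm : m < n := hm1
        have ih' := ih hm.le
        have hwtm : wt w (g.sol m) ≤ wt w (g.sol (m + 1)) :=
          wt_mono _ _ (sol_succ m hm) (sol_sub (m + 1) hm1)
        rcases le_or_gt b (wt w (g.sol m)) with hbm | hbm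
        · have heq : min b (wt w (g.sol (m + 1))) = min b (wt w (g.sol m)) := by
            rw [min_eq_left hbm, min_eq_left (hbm.trans hwtm)]
          rw [heq]
          exact ih'
        · rcases le_or_gt (wt w (g.sol (m + 1))) a with ham | ham
          · have heq : max a (min b (wt w (g.sol (m + 1)))) = a :=
              max_eq_left ((min_le_right _ _).trans ham)
            rw [heq]
          · set p := max a (wt w (g.sol m)) with hpdef
            set q := max a (min b (wt w (g.sol (m + 1)))) with hqdef
            have hminm : min b (wt w (g.sol m)) = wt w (g.sol m) := min_eq_right hbm.le
            have hp1 : wt w (g.sol m) ≤ p := le_max_right _ _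
            have hpq : p ≤ q := by
              rw [hpdef, hqdef, ← hminm]
              exact max_le_max le_rfl (min_le_min le_rfl hwtm)
            have hq2 : q ≤ wt w (g.sol (m + 1)) := max_le ham.le (min_le_right _ _)
            have hqb : q ≤ b := max_le hab (min_le_left _ _)
            have hVp := hV m hm p hp1 (hpq.trans hq2)
            have hVq := hV m hm q (hp1.trans hpq) hq2
            set ρ := marginal f (g.sol m) {g.order.get ⟨m, hm⟩} / w (g.order.get ⟨m, hm⟩)
              with hρdef
            have hρ0 := rho_nonneg m hm
            have hfitm : wt w (g.sol m) ≤ W - Xset.sup' hXne w := by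
              have hpb : p ≤ b := hpq.trans hqb
              linarith [hp1]
            have hkey := hcs m hm hfitm
            have ha0 : c - V p ≤ ρ * s := by
              rw [hVp]
              nlinarith [mul_nonneg hρ0 (sub_nonneg.2 hp1)]
            have hδ : (0 : ℝ) ≤ q - p := sub_nonneg.2 hpq
            have hL1 := aux_exp_step s ρ (q - p) (c - V p) hs hρ0 hδ ha0
            have hVqp : c - V q = (c - V p) - ρ * (q - p) := by rw [hVp, hVq]; ring
            have hstep : (c - V q) * Real.exp (q / s) ≤ (c - V p) * Real.exp (p / s) := by
              have h2 : c - V q ≤ (c - V p) * Real.exp (-(q - p) / s) := by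
                rw [hVqp]; exact hL1
              have h3 := mul_le_mul_of_nonneg_right h2 (Real.exp_nonneg (q / s))
              have h4 : Real.exp (-(q - p) / s) * Real.exp (q / s) = Real.exp (p / s) := by
                rw [← Real.exp_add]
                congr 1
                field_simp
                ring
              calc (c - V q) * Real.exp (q / s)
                  ≤ (c - V p) * Real.exp (-(q - p) / s) * Real.exp (q / s) := h3
                _ = (c - V p) * Real.exp (p / s) := by rw [mul_assoc, h4]
            have ihp : (c - V p) * Real.exp (p / s) ≤ (c - V a) * Real.exp (a / s) := by
              rw [hpdef, ← hminm]
              exact ih'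
            exact hstep.trans ihp
    have hfin := main n le_rfl
    rw [min_eq_left hb', max_eq_right hab] at hfin
    have hE : (0 : ℝ) < Real.exp (b / s) := Real.exp_pos _
    have hexp : Real.exp (-(b - a) / s) = Real.exp (a / s) / Real.exp (b / s) := by
      rw [← Real.exp_sub]
      congr 1
      field_simp
      ring
    rw [hexp, ← mul_div_assoc, le_div_iff₀ hE]
    exact hfin
  -- the main per-piece bound, by induction on the piece index
  have Cmain : ∀ j, 1 ≤ j → j ≤ k → ∀ v : ℝ, partD f w X (j - 1) ≤ v →
      v ≤ min (W - Xset.sup' hXne w) (wt w g.out) →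
      f (partS X j) - V v ≤ partR f w X j * wt w (partS X j) *
        Real.exp (-(v - partD f w X (j - 1)) / wt w (partS X j)) := by
    intro j h1
    induction j, h1 using Nat.le_induction with
    | base =>
      intro hjk v hD hvW
      simp only [Nat.sub_self, D0] at hD ⊢
      have hs1 := sjpos 1 le_rfl hjk
      have heng := engine (f (partS X 1)) (wt w (partS X 1)) hs1
        (fun i hi hfit => key 1 le_rfl hjk i hi hfit) 0 v le_rfl hD hvW
      rw [V0, ← r1s1] at heng
      simpa using heng
    | succ j hj ih =>
      intro hjk v hD hvW
      simp only [Nat.add_sub_cancel] at hD ⊢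
      have hjk' : j ≤ k := by omega
      have hsj := sjpos j hj hjk'
      have hsj1 := sjpos (j + 1) (by omega) hjk
      have hrj := hrpos j (Finset.mem_Icc.2 ⟨hj, hjk'⟩)
      have hrj1 := hrpos (j + 1) (Finset.mem_Icc.2 ⟨by omega, hjk⟩)
      have hlog : 0 ≤ Real.log (partR f w X j / partR f w X (j + 1)) :=
        Real.log_nonneg ((one_le_div hrj1).2 (hr j (Finset.mem_Icc.2 ⟨hj, by omega⟩)))
      have hDstep := Dstep j hj hjk
      have hD1 : partD f w X (j - 1) ≤ partD f w X j := by
        nlinarith [mul_nonneg hsj.le hlog]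
      have hDW : partD f w X j ≤ min (W - Xset.sup' hXne w) (wt w g.out) := hD.trans hvW
      have hih := ih hjk' (partD f w X j) hD1 hDW
      -- evaluate the exponential at the breakpoint
      have hexp : Real.exp (-(partD f w X j - partD f w X (j - 1)) / wt w (partS X j))
          = partR f w X (j + 1) / partR f w X j := by
        have hdd : partD f w X j - partD f w X (j - 1)
            = wt w (partS X j) * Real.log (partR f w X j / partR f w X (j + 1)) := by
          linarith
        rw [hdd]
        have : -(wt w (partS X j) * Real.log (partR f w X j / partR f w X (j + 1)))
            / wt w (partS X j) = -Real.log (partR f w X j / partR f w X (j + 1)) := by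
          rw [neg_div, mul_comm, mul_div_assoc, div_self hsj.ne', mul_one]
        rw [this, Real.exp_neg, Real.exp_log (div_pos hrj hrj1), inv_div]
      rw [hexp] at hih
      have hih2 : f (partS X j) - V (partD f w X j) ≤ partR f w X (j + 1) * wt w (partS X j) := by
        have hrr : partR f w X j * wt w (partS X j) * (partR f w X (j + 1) / partR f w X j)
            = partR f w X (j + 1) * wt w (partS X j) := by
          field_simp
        rw [hrr] at hih
        exact hih
      have hstart : f (partS X (j + 1)) - V (partD f w X j)
          ≤ partR f w X (j + 1) * wt w (partS X (j + 1)) := by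
        rw [fS_succ j hjk, wt_partS_succ j hjk]
        nlinarith [hih2]
      have heng := engine (f (partS X (j + 1))) (wt w (partS X (j + 1))) hsj1
        (fun i hi hfit => key (j + 1) (by omega) hjk i hi hfit)
        (partD f w X j) v (Dnonneg j hjk) hD hvW
      have hfinal := heng.trans (mul_le_mul_of_nonneg_right hstart
        (Real.exp_nonneg (-(v - partD f w X j) / wt w (partS X (j + 1)))))
      linarith
  -- put the pieces together
  have final : ∀ m j, 1 ≤ j → j ≤ k → k - j ≤ m → partD f w X (j - 1) ≤ u → h u ≤ V u := by
    intro m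
    induction m with
    | zero =>
      intro j h1 hjk hm hD
      have hjeq : j = k := by omega
      have hhu := hh j (Finset.mem_Icc.2 ⟨h1, hjk⟩) u hD (Or.inl hjeq)
      have hC := Cmain j h1 hjk u hD huW
      rw [hhu]; linarith
    | succ m ih =>
      intro j h1 hjk hm hD
      by_cases hcase : j = k ∨ u < partD f w X j
      · have hhu := hh j (Finset.mem_Icc.2 ⟨h1, hjk⟩) u hD hcase
        have hC := Cmain j h1 hjk u hD huW
        rw [hhu]; linarith
      · push_neg at hcase
        refine ih (j + 1) (by omega) (by omega) (by omega) ?_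
        simpa using hcase.2
  refine final k 1 le_rfl hk (by omega) ?_
  simpa [D0] using hu0
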